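/- Let T be a projective torus in P^{s-1} over the finite field K = F_q with q ≥ 3. Then |T| = (q-1)^{s-1}, and the index of regularity of S/I(T) equals (s-1)(q-2); that is, the Hilbert function satisfies H_T(d) = (q-1)^{s-1} for all d ≥ (s-1)(q-2), and (s-1)(q-2) is the least integer with this property. -/

import Mathlib

noncomputable section

open scoped BigOperators

/-- The vanishing ideal `I(Y)` of a set `Y` of points in projective space: the ideal
generated by the homogeneous polynomials vanishing at every point of `Y`. -/
def vanishingIdeal (K : Type*) [Field K] {s : ℕ}
    (Y : Set (Projectivization K (Fin s → K))) : Ideal (MvPolynomial (Fin s) K) :=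
  Ideal.span {f | (∃ d, f.IsHomogeneous d) ∧ ∀ P ∈ Y, MvPolynomial.eval P.rep f = 0}

/-- The Hilbert function `d ↦ dim_K (S/I)_d` of the standard graded quotient `S/I`. -/
def hilbertFunction {K : Type*} [Field K] {s : ℕ}
    (I : Ideal (MvPolynomial (Fin s) K)) (d : ℕ) : ℕ :=
  Module.finrank K ((MvPolynomial.homogeneousSubmodule (Fin s) K d).map
    (Ideal.Quotient.mkₐ K I).toLinearMap)

/-- The index of regularity of `S/I(Y)`: the least `p ≥ 0` such that
`H_Y(d) = |Y|` for all `d ≥ p`. -/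
def regIndex {K : Type*} [Field K] {s : ℕ}
    (Y : Set (Projectivization K (Fin s → K))) : ℕ :=
  sInf {p : ℕ | ∀ d, p ≤ d → hilbertFunction (vanishingIdeal K Y) d = Y.ncard}

/-- The algebraic toric set in `P^{s-1}` parameterized by the monomials `y^{v_1},…,y^{v_s}`. -/
def toricSet (K : Type*) [Field K] {n s : ℕ} (v : Fin s → Fin n → ℕ) :
    Set (Projectivization K (Fin s → K)) :=
  {P | ∃ x : Fin n → K, (∀ j, x j ≠ 0) ∧
      ∃ h : (fun i : Fin s => ∏ j, x j ^ v i j) ≠ 0,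
        P = Projectivization.mk K (fun i : Fin s => ∏ j, x j ^ v i j) h}

/-- The projective torus in `P^{s-1}`: the points all of whose coordinates are nonzero. -/
def projTorus (K : Type*) [Field K] (s : ℕ) : Set (Projectivization K (Fin s → K)) :=
  {P | ∀ i, P.rep i ≠ 0}

/-- The parameterized (evaluation) code `C_Y(d)`: the image of the degree-`d` evaluation map
`f ↦ (f(P)/t_1^d(P))_{P ∈ Y}`. -/
def evalCode (K : Type*) [Field K] {s : ℕ} [NeZero s]
    (Y : Set (Projectivization K (Fin s → K))) (d : ℕ) : Set (Y → K) :=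
  {w | ∃ f ∈ MvPolynomial.homogeneousSubmodule (Fin s) K d,
      w = fun P : Y => MvPolynomial.eval (P : Projectivization K (Fin s → K)).rep f /
        ((P : Projectivization K (Fin s → K)).rep 0) ^ d}

/-- The minimum distance of a code: the least number of nonzero entries of a
nonzero codeword. -/
def minDist {K : Type*} [Field K] {ι : Type*} (C : Set (ι → K)) : ℕ :=
  sInf {m | ∃ w ∈ C, w ≠ 0 ∧ m = {i | w i ≠ 0}.ncard}

/-- `v 1,…,v s` are the characteristic vectors of the edges of a clutter: all the entries
are in `{0,1}` and no edge (support) is contained in another. -/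
def IsClutter {n s : ℕ} (v : Fin s → Fin n → ℕ) : Prop :=
  (∀ i j, v i j ≤ 1) ∧ ∀ i k : Fin s, i ≠ k → ∃ j, v i j ≠ 0 ∧ v k j = 0

/-- An ideal of `K[t_1,…,t_s]` is a complete intersection if it can be generated by `s-1`
homogeneous polynomials. -/
def IsCompleteIntersection {K : Type*} [Field K] {s : ℕ}
    (I : Ideal (MvPolynomial (Fin s) K)) : Prop :=
  ∃ g : Fin (s - 1) → MvPolynomial (Fin s) K,
    (∀ i, ∃ d, (g i).IsHomogeneous d) ∧ Ideal.span (Set.range g) = I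

end

noncomputable section S4Aux

open MvPolynomial

set_option linter.unusedSectionVars false

/-- A low-priority classical decidable equality instance, so that `Fintype Kˣ` is found. -/
noncomputable instance (priority := 50) s4DecEq {α : Type*} : DecidableEq α :=
  Classical.decEq α

namespace S4

variable {K : Type*} [Field K] [Fintype K] {m : ℕ}

/-- The normalized point of the torus attached to `x : (Kˣ)^m`. -/
def pt (x : Fin m → Kˣ) : Fin (m + 1) → K := Fin.cons 1 fun j => (x j : K)

lemma pt_apply_ne_zero (x : Fin m → Kˣ) (i : Fin (m + 1)) : pt x i ≠ 0 := by
  refine Fin.cases ?_ ?_ i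
  · simp [pt]
  · intro j; simp [pt]

lemma pt_ne_zero (x : Fin m → Kˣ) : pt x ≠ 0 :=
  fun h => pt_apply_ne_zero x 0 (congrFun h 0)

/-- The projective point attached to `x`. -/
def toT (x : Fin m → Kˣ) : Projectivization K (Fin (m + 1) → K) :=
  Projectivization.mk K (pt x) (pt_ne_zero x)

lemma toT_rep (x : Fin m → Kˣ) : ∃ a : Kˣ, a • pt x = (toT x).rep :=
  Projectivization.exists_smul_eq_mk_rep K _ _

lemma toT_mem (x : Fin m → Kˣ) : toT x ∈ projTorus K (m + 1) := by
  obtain ⟨a, ha⟩ := toT_rep x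
  intro i
  rw [← ha]
  simp only [Pi.smul_apply, Units.smul_def, smul_eq_mul]
  exact mul_ne_zero a.ne_zero (pt_apply_ne_zero x i)

lemma toT_bij :
    Function.Bijective (fun x : Fin m → Kˣ =>
      (⟨toT x, toT_mem x⟩ : ↥(projTorus K (m + 1)))) := by
  constructor
  · intro x y hxy
    have h : toT x = toT y := congrArg Subtype.val hxy
    rw [toT, toT, Projectivization.mk_eq_mk_iff] at h
    obtain ⟨a, ha⟩ := h
    have h0 := congrFun ha 0
    simp only [Pi.smul_apply, Units.smul_def, smul_eq_mul, pt, Fin.cons_zero, mul_one] at h0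
    funext j
    have hj := congrFun ha j.succ
    simp only [Pi.smul_apply, Units.smul_def, smul_eq_mul, pt, Fin.cons_succ, h0, one_mul] at hj
    exact Units.ext hj.symm
  · rintro ⟨P, hP⟩
    have hc0 : P.rep 0 ≠ 0 := hP 0
    refine ⟨fun j => Units.mk0 (P.rep j.succ / P.rep 0)
      (div_ne_zero (hP j.succ) hc0), ?_⟩
    apply Subtype.ext
    show toT _ = P
    rw [toT]
    conv_rhs => rw [← Projectivization.mk_rep P]
    rw [Projectivization.mk_eq_mk_iff]
    refine ⟨(Units.mk0 (P.rep 0) hc0)⁻¹, ?_⟩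
    funext i
    refine Fin.cases ?_ ?_ i
    · simp [pt, Units.smul_def, inv_mul_cancel₀ hc0]
    · intro j
      simp [pt, Units.smul_def, div_eq_inv_mul]

lemma torus_ncard :
    (projTorus K (m + 1)).ncard = (Fintype.card K - 1) ^ m := by
  have h := Nat.card_eq_of_bijective _ (toT_bij (K := K) (m := m))
  rw [← Nat.card_coe_set_eq, ← h, Nat.card_eq_fintype_card, Fintype.card_fun,
    Fintype.card_units, Fintype.card_fin]

lemma eval_smul_of_isHomogeneous {σ : Type*} {f : MvPolynomial σ K} {d : ℕ}
    (hf : f.IsHomogeneous d) (c : K) (x : σ → K) :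
    eval (c • x) f = c ^ d * eval x f := by
  conv_lhs => rw [← f.support_sum_monomial_coeff]
  conv_rhs => rw [← f.support_sum_monomial_coeff]
  rw [map_sum, map_sum, Finset.mul_sum]
  refine Finset.sum_congr rfl fun b hb => ?_
  have hd : (∑ i ∈ b.support, b i) = d := by
    have h := hf (mem_support_iff.1 hb)
    simpa [Finsupp.weight_apply, Finsupp.sum] using h
  rw [eval_monomial, eval_monomial, Finsupp.prod, Finsupp.prod]
  simp only [Pi.smul_apply, smul_eq_mul, mul_pow]
  rw [Finset.prod_mul_distrib, Finset.prod_pow_eq_pow_sum, hd]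
  ring

/-- The evaluation map at the normalized points of the torus. -/
def E : MvPolynomial (Fin (m + 1)) K →ₗ[K] ((Fin m → Kˣ) → K) where
  toFun f := fun x => eval (pt x) f
  map_add' f g := by funext x; simp
  map_smul' c f := by
    funext x
    simp [MvPolynomial.smul_eq_C_mul]

lemma E_apply (f : MvPolynomial (Fin (m + 1)) K) (x : Fin m → Kˣ) :
    E f x = eval (pt x) f := rfl

lemma eval_rep_eq {d : ℕ} {f : MvPolynomial (Fin (m + 1)) K}
    (hf : f.IsHomogeneous d) (x : Fin m → Kˣ) :
    ∃ a : Kˣ, eval (toT x).rep f = (a : K) ^ d * eval (pt x) f := by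
  obtain ⟨a, ha⟩ := toT_rep x
  exact ⟨a, by rw [← ha, Units.smul_def, eval_smul_of_isHomogeneous hf]⟩

lemma mem_vanishing_iff {d : ℕ} {f : MvPolynomial (Fin (m + 1)) K}
    (hf : f.IsHomogeneous d) :
    f ∈ _root_.vanishingIdeal K (projTorus K (m + 1)) ↔ E f = 0 := by
  constructor
  · intro hfI
    have hker : _root_.vanishingIdeal K (projTorus K (m + 1)) ≤
        RingHom.ker (Pi.ringHom fun P : ↥(projTorus K (m + 1)) =>
          (MvPolynomial.eval P.1.rep :
            MvPolynomial (Fin (m + 1)) K →+* K)) := by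
      unfold _root_.vanishingIdeal
      rw [Ideal.span_le]
      rintro g ⟨-, hg⟩
      rw [SetLike.mem_coe, RingHom.mem_ker]
      funext P
      exact hg P.1 P.2
    have hvan : ∀ P ∈ projTorus K (m + 1), eval (Projectivization.rep P) f = 0 := by
      intro P hP
      have h := hker hfI
      rw [RingHom.mem_ker] at h
      exact congrFun h ⟨P, hP⟩
    funext x
    obtain ⟨a, ha⟩ := eval_rep_eq hf x
    rw [hvan _ (toT_mem x)] at ha
    have h0 : eval (pt x) f = 0 := by
      rcases mul_eq_zero.1 ha.symm with h | h
      · exact absurd h (pow_ne_zero d a.ne_zero)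
      · exact h
    show E f x = 0
    rw [E_apply, h0]
  · intro hE
    unfold _root_.vanishingIdeal
    apply Ideal.subset_span
    refine ⟨⟨d, hf⟩, fun P hP => ?_⟩
    obtain ⟨x, hx⟩ := toT_bij.2 ⟨P, hP⟩
    have hPx : toT x = P := congrArg Subtype.val hx
    obtain ⟨a, ha⟩ := eval_rep_eq hf x
    rw [hPx] at ha
    have h0 : eval (pt x) f = 0 := by rw [← E_apply, hE]; rfl
    rw [ha, h0, mul_zero]

lemma findim_homog (d : ℕ) :
    FiniteDimensional K ↥(homogeneousSubmodule (Fin (m + 1)) K d) :=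
  Submodule.finiteDimensional_of_le
    (show homogeneousSubmodule (Fin (m + 1)) K d ≤
        restrictTotalDegree (Fin (m + 1)) K d from
      fun f hf => (mem_restrictTotalDegree _ _ _).2
        ((mem_homogeneousSubmodule _ _).1 hf).totalDegree_le)

lemma hilbert_eq (d : ℕ) :
    hilbertFunction (_root_.vanishingIdeal K (projTorus K (m + 1))) d
      = Module.finrank K ↥((homogeneousSubmodule (Fin (m + 1)) K d).map E) := by
  classical
  set I := _root_.vanishingIdeal K (projTorus K (m + 1)) with hI
  set N := homogeneousSubmodule (Fin (m + 1)) K d with hN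
  haveI : FiniteDimensional K ↥N := findim_homog d
  set φ := (Ideal.Quotient.mkₐ K I).toLinearMap with hφ
  have h1 : N.map φ = LinearMap.range (φ ∘ₗ N.subtype) := by
    rw [LinearMap.range_comp, Submodule.range_subtype]
  have h2 : N.map E = LinearMap.range (E ∘ₗ N.subtype) := by
    rw [LinearMap.range_comp, Submodule.range_subtype]
  have hker : LinearMap.ker (φ ∘ₗ N.subtype) = LinearMap.ker (E ∘ₗ N.subtype) := by
    ext g
    simp only [LinearMap.mem_ker, LinearMap.comp_apply, Submodule.subtype_apply]
    have hg : (g : MvPolynomial (Fin (m + 1)) K).IsHomogeneous d := g.2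
    rw [hφ]
    simp only [AlgHom.toLinearMap_apply, Ideal.Quotient.mkₐ_eq_mk,
      Ideal.Quotient.eq_zero_iff_mem]
    exact mem_vanishing_iff hg
  have r1 := LinearMap.finrank_range_add_finrank_ker (φ ∘ₗ N.subtype)
  have r2 := LinearMap.finrank_range_add_finrank_ker (E ∘ₗ N.subtype)
  rw [hker] at r1
  show Module.finrank K ↥(N.map φ) = Module.finrank K ↥(N.map E)
  rw [h1, h2]
  omega

/-- The character of `(Kˣ)^m` attached to exponents `a`. -/
def chi (a : Fin m → ℕ) : (Fin m → Kˣ) →* K where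
  toFun x := ∏ j, (x j : K) ^ a j
  map_one' := by simp
  map_mul' x y := by
    simp only [Pi.mul_apply, Units.val_mul, mul_pow]
    rw [Finset.prod_mul_distrib]

lemma chi_apply (a : Fin m → ℕ) (x : Fin m → Kˣ) :
    chi a x = ∏ j, (x j : K) ^ a j := rfl

lemma chi_mulSingle [DecidableEq (Fin m)] (a : Fin m → ℕ) (j : Fin m) (g : Kˣ) :
    chi a (Pi.mulSingle j g) = (g : K) ^ a j := by
  rw [chi_apply, Finset.prod_eq_single j]
  · rw [Pi.mulSingle_eq_same]
  · intro i _ hij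
    rw [Pi.mulSingle_eq_of_ne hij, Units.val_one, one_pow]
  · intro h; exact absurd (Finset.mem_univ j) h

lemma chi_inj :
    Function.Injective (fun a : Fin m → Fin (Fintype.card Kˣ) =>
      chi (K := K) fun j => (a j : ℕ)) := by
  classical
  intro a b hab
  obtain ⟨g, hg⟩ := IsCyclic.exists_generator (α := Kˣ)
  have horder : orderOf g = Fintype.card Kˣ := by
    rw [orderOf_eq_card_of_forall_mem_zpowers hg, Nat.card_eq_fintype_card]
  funext j
  have h := DFunLike.congr_fun hab (Pi.mulSingle j g)
  rw [chi_mulSingle, chi_mulSingle] at h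
  have h' : g ^ (a j : ℕ) = g ^ (b j : ℕ) :=
    Units.ext (by simpa [Units.val_pow_eq_pow_val] using h)
  rw [pow_eq_pow_iff_modEq, horder] at h'
  have hh : (a j : ℕ) = b j := by
    have h2 := h'
    unfold Nat.ModEq at h2
    rwa [Nat.mod_eq_of_lt (a j).isLt, Nat.mod_eq_of_lt (b j).isLt] at h2
  exact Fin.ext hh

lemma chi_li :
    LinearIndependent K (fun a : Fin m → Fin (Fintype.card Kˣ) =>
      ⇑(chi (K := K) fun j => (a j : ℕ))) :=
  (linearIndependent_monoidHom (Fin m → Kˣ) K).comp _ chi_inj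

lemma chi_mod (a : Fin m → ℕ) :
    ⇑(chi (K := K) a) = ⇑(chi (K := K) fun j => a j % Fintype.card Kˣ) := by
  funext x
  rw [chi_apply, chi_apply]
  refine Finset.prod_congr rfl fun j _ => ?_
  conv_lhs => rw [← Nat.div_add_mod (a j) (Fintype.card Kˣ)]
  rw [pow_add, pow_mul, ← Units.val_pow_eq_pow_val, pow_card_eq_one, Units.val_one,
    one_pow, one_mul]

lemma chi_span :
    Submodule.span K (Set.range fun a : Fin m → Fin (Fintype.card Kˣ) =>
      ⇑(chi (K := K) fun j => (a j : ℕ))) = ⊤ := by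
  classical
  have hr : 0 < Fintype.card Kˣ := Fintype.card_pos
  haveI : Nonempty (Fin m → Fin (Fintype.card Kˣ)) := ⟨fun _ => ⟨0, hr⟩⟩
  refine chi_li.span_eq_top_of_card_eq_finrank ?_
  simp [Module.finrank_pi, Fintype.card_fun]

lemma E_monomial (b : Fin (m + 1) →₀ ℕ) (c : K) :
    E (monomial b c) = c • ⇑(chi (K := K) fun j => b j.succ) := by
  funext x
  show eval (pt x) (monomial b c) = c * chi (fun j => b j.succ) x
  rw [eval_monomial, Finsupp.prod_pow, chi_apply, Fin.prod_univ_succ]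
  simp [pt]

lemma sum_univ_eq_degree {d : ℕ} {f : MvPolynomial (Fin (m + 1)) K}
    (hf : f.IsHomogeneous d) {b : Fin (m + 1) →₀ ℕ} (hb : b ∈ f.support) :
    (∑ i : Fin (m + 1), b i) = d := by
  have h := hf (mem_support_iff.1 hb)
  have h2 : (∑ i ∈ b.support, b i) = d := by
    simpa [Finsupp.weight_apply, Finsupp.sum] using h
  rw [← h2]
  exact (Finset.sum_subset (Finset.subset_univ _)
    (fun i _ hi => Finsupp.notMem_support_iff.1 hi)).symm

lemma map_E_eq_top {d : ℕ} (hd : m * (Fintype.card Kˣ - 1) ≤ d) :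
    (homogeneousSubmodule (Fin (m + 1)) K d).map E = ⊤ := by
  classical
  rw [eq_top_iff, ← chi_span, Submodule.span_le]
  rintro _ ⟨a, rfl⟩
  have hsum : (∑ j, (a j : ℕ)) ≤ d := by
    calc (∑ j, (a j : ℕ)) ≤ ∑ _j : Fin m, (Fintype.card Kˣ - 1) :=
          Finset.sum_le_sum fun j _ => by
            have := (a j).isLt; omega
      _ = m * (Fintype.card Kˣ - 1) := by
          rw [Finset.sum_const, Finset.card_univ, Fintype.card_fin, smul_eq_mul]
      _ ≤ d := hd
  set b : Fin (m + 1) →₀ ℕ :=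
    Finsupp.equivFunOnFinite.symm
      (Fin.cons (d - ∑ j, (a j : ℕ)) fun j => (a j : ℕ)) with hb
  have hb0 : b 0 = d - ∑ j, (a j : ℕ) := by
    rw [hb, Finsupp.coe_equivFunOnFinite_symm, Fin.cons_zero]
  have hbs : ∀ j : Fin m, b j.succ = a j := fun j => by
    rw [hb, Finsupp.coe_equivFunOnFinite_symm, Fin.cons_succ]
  refine ⟨monomial b 1, ?_, ?_⟩
  · rw [SetLike.mem_coe, mem_homogeneousSubmodule]
    apply isHomogeneous_monomial
    have hdeg : b.degree = ∑ i : Fin (m + 1), b i := by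
      rw [Finsupp.degree]
      exact Finset.sum_subset (Finset.subset_univ _)
        (fun i _ hi => Finsupp.notMem_support_iff.1 hi)
    have hdeg2 : (∑ i : Fin (m + 1), b i)
        = (d - ∑ j, (a j : ℕ)) + ∑ j, (a j : ℕ) := by
      have hsums : (∑ i : Fin m, b i.succ) = ∑ j, (a j : ℕ) :=
        Finset.sum_congr rfl fun j _ => hbs j
      rw [Fin.sum_univ_succ, hb0, hsums]
    rw [hdeg, hdeg2]
    omega
  · rw [E_monomial, one_smul]
    exact congrArg (fun g => ⇑(chi (K := K) g)) (funext hbs)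

set_option maxHeartbeats 1000000 in
lemma map_E_ne_top {d : ℕ} (hd : d < m * (Fintype.card Kˣ - 1)) :
    (homogeneousSubmodule (Fin (m + 1)) K d).map E ≠ ⊤ := by
  classical
  have hr : 0 < Fintype.card Kˣ := Fintype.card_pos
  set r := Fintype.card Kˣ with hrdef
  set atop : Fin m → Fin r := fun _ => ⟨r - 1, by omega⟩ with hatop
  set v : (Fin m → Fin r) → ((Fin m → Kˣ) → K) :=
    fun a => ⇑(chi (K := K) fun j => (a j : ℕ)) with hv
  set U := Submodule.span K (v '' {a | a ≠ atop}) with hU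
  have hsub : (homogeneousSubmodule (Fin (m + 1)) K d).map E ≤ U := by
    rintro w hw
    rw [Submodule.mem_map] at hw
    obtain ⟨f, hf, rfl⟩ := hw
    have hfh : f.IsHomogeneous d := hf
    rw [← f.support_sum_monomial_coeff, map_sum]
    apply Submodule.sum_mem
    intro b hb
    rw [E_monomial, chi_mod]
    apply Submodule.smul_mem
    apply Submodule.subset_span
    refine ⟨(fun j : Fin m => (⟨b j.succ % r, Nat.mod_lt _ hr⟩ : Fin r)), ?_, rfl⟩
    intro heq
    have hall : ∀ j : Fin m, b j.succ % r = r - 1 :=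
      fun j => congrArg Fin.val (congrFun heq j)
    have hdeg : (∑ i : Fin (m + 1), b i) = d := sum_univ_eq_degree hfh hb
    have hle : m * (r - 1) ≤ d := by
      calc m * (r - 1) = ∑ _j : Fin m, (r - 1) := by
            rw [Finset.sum_const, Finset.card_univ, Fintype.card_fin, smul_eq_mul]
        _ = ∑ j : Fin m, b j.succ % r := by
            exact Finset.sum_congr rfl fun j _ => (hall j).symm
        _ ≤ ∑ j : Fin m, b j.succ :=
            Finset.sum_le_sum fun j _ => Nat.mod_le _ _
        _ ≤ ∑ i : Fin (m + 1), b i := by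
            rw [Fin.sum_univ_succ]; omega
        _ = d := hdeg
    omega
  intro htop
  have hmem : v atop ∈ U := hsub (by rw [htop]; trivial)
  have hnot : atop ∉ {a | a ≠ atop} := by simp
  exact (chi_li (K := K) (m := m)).notMem_span_image
    (s := {a | a ≠ atop}) (x := atop) hnot hmem

end S4

end S4Aux

/-- For the projective torus `T ⊆ P^{s-1}` over `F_q` (`q ≥ 3`),
`|T| = (q-1)^{s-1}`, the Hilbert function of `S/I(T)` equals `(q-1)^{s-1}` in every
degree `d ≥ (s-1)(q-2)`, and `(s-1)(q-2)` is the least integer with this property,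
i.e. the index of regularity of `S/I(T)` equals `(s-1)(q-2)`. -/
theorem stmt4 {K : Type*} [Field K] [Fintype K] {q s : ℕ}
    (hq : Fintype.card K = q) (hq3 : 3 ≤ q) (hs : 2 ≤ s) :
    (projTorus K s).ncard = (q - 1) ^ (s - 1) ∧
    (∀ d, (s - 1) * (q - 2) ≤ d →
      hilbertFunction (vanishingIdeal K (projTorus K s)) d = (q - 1) ^ (s - 1)) ∧
    regIndex (projTorus K s) = (s - 1) * (q - 2) := by
  classical
  obtain ⟨m, rfl⟩ : ∃ m, s = m + 1 := ⟨s - 1, by omega⟩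
  have hm : 1 ≤ m := by omega
  have hs1 : m + 1 - 1 = m := rfl
  have hrq : Fintype.card Kˣ = q - 1 := by rw [Fintype.card_units, hq]
  have hr2 : 2 ≤ Fintype.card Kˣ := by omega
  have hq2 : q - 2 = Fintype.card Kˣ - 1 := by omega
  have hcard : (projTorus K (m + 1)).ncard = (q - 1) ^ m := by
    rw [S4.torus_ncard, hq]
  have hfin : Module.finrank K ((Fin m → Kˣ) → K) = (q - 1) ^ m := by
    rw [Module.finrank_pi, Fintype.card_fun, Fintype.card_units, hq, Fintype.card_fin]
  have hH : ∀ d, m * (q - 2) ≤ d →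
      hilbertFunction (vanishingIdeal K (projTorus K (m + 1))) d = (q - 1) ^ m := by
    intro d hd
    have heq0 : m * (q - 2) = m * (Fintype.card Kˣ - 1) := by rw [hq2]
    rw [S4.hilbert_eq, S4.map_E_eq_top (by omega : m * (Fintype.card Kˣ - 1) ≤ d),
      finrank_top]
    exact hfin
  refine ⟨by simpa [hs1] using hcard, by simpa [hs1] using hH, ?_⟩
  unfold regIndex
  rw [hs1]
  have hmem : m * (q - 2) ∈ {p : ℕ | ∀ d, p ≤ d →
      hilbertFunction (vanishingIdeal K (projTorus K (m + 1))) d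
        = (projTorus K (m + 1)).ncard} := by
    intro d hd
    rw [hH d hd, hcard]
  refine le_antisymm (Nat.sInf_le hmem) ?_
  by_contra hlt
  push_neg at hlt
  have hinf := Nat.sInf_mem (⟨_, hmem⟩ : Set.Nonempty
    {p : ℕ | ∀ d, p ≤ d →
      hilbertFunction (vanishingIdeal K (projTorus K (m + 1))) d
        = (projTorus K (m + 1)).ncard})
  have hpos : 1 ≤ m * (q - 2) := by
    have := Nat.mul_le_mul hm (show 1 ≤ q - 2 by omega)
    omega
  set d1 := m * (q - 2) - 1 with hd1
  have heq : m * (q - 2) = m * (Fintype.card Kˣ - 1) := by rw [hq2]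
  have hd1lt : d1 < m * (Fintype.card Kˣ - 1) := by omega
  have hle : sInf {p : ℕ | ∀ d, p ≤ d →
      hilbertFunction (vanishingIdeal K (projTorus K (m + 1))) d
        = (projTorus K (m + 1)).ncard} ≤ d1 := by omega
  have hcontr := hinf d1 hle
  rw [S4.hilbert_eq, hcard] at hcontr
  have htop : (MvPolynomial.homogeneousSubmodule (Fin (m + 1)) K d1).map S4.E = ⊤ :=
    Submodule.eq_top_of_finrank_eq (by rw [hcontr, hfin])
  exact S4.map_E_ne_top hd1lt htop
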